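/- Fix γ ∈ (0, 1/2). For integers n ≥ 1 define A(n) = 1 − 2 e^{−1/n} cos(n^{−γ}) + e^{−2/n} and, for real θ, A(θ,n) = 1 − 2 e^{iθ} cos(n^{−γ}) + e^{2iθ}. Then there exists a constant C > 0 such that for all n ≥ 2: (a) A(n)^{−1} ≤ C n^{2γ}, and |A(θ,n)| ≤ C A(n) for all θ with |θ| ≤ n^{−γ}; (b) |A(θ,n)^2 − A(n)^2| ≤ C A(n)^2 / n for all θ with |θ| ≤ 1/n; (c) |A(θ,n)^2 − A(n)^2| ≤ C A(n)^2 n^{2γ} |θ|^{2γ+1} for all θ with 1/n ≤ |θ| ≤ n^{−γ}. -/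

import Mathlib

open Complex Real

lemma aux_exp_I_sub_one (θ : ℝ) : ‖Complex.exp (θ * Complex.I) - 1‖ ≤ |θ| := by
  have h1 : Complex.exp (θ * Complex.I) - 1
      = ((Real.cos θ - 1 : ℝ) : ℂ) + ((Real.sin θ : ℝ) : ℂ) * Complex.I := by
    rw [Complex.exp_mul_I]
    push_cast [← Complex.ofReal_cos, ← Complex.ofReal_sin]
    ring
  rw [h1, Complex.norm_add_mul_I]
  have hc := Real.one_sub_sq_div_two_le_cos (x := θ)
  have hs := Real.sin_sq_add_cos_sq θ
  have h2 : (Real.cos θ - 1)^2 + (Real.sin θ)^2 ≤ θ^2 := by nlinarith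
  calc Real.sqrt ((Real.cos θ - 1)^2 + (Real.sin θ)^2) ≤ Real.sqrt (θ^2) := Real.sqrt_le_sqrt h2
    _ = |θ| := Real.sqrt_sq_eq_abs θ

set_option maxHeartbeats 4000000 in
/-- Estimates on `A(n) = 1 - 2e^{-1/n}cos(n^{-γ}) + e^{-2/n}` and
`A(θ,n) = 1 - 2e^{iθ}cos(n^{-γ}) + e^{2iθ}` for `γ ∈ (0,1/2)`:
(a) `A(n)⁻¹ ≤ C n^{2γ}` and `|A(θ,n)| ≤ C A(n)` for `|θ| ≤ n^{-γ}`;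
(b) `|A(θ,n)² - A(n)²| ≤ C A(n)²/n` for `|θ| ≤ 1/n`;
(c) `|A(θ,n)² - A(n)²| ≤ C A(n)² n^{2γ} |θ|^{2γ+1}` for `1/n ≤ |θ| ≤ n^{-γ}`. -/
theorem stmt11 (γ : ℝ) (hγ : γ ∈ Set.Ioo (0:ℝ) (1 / 2)) :
    ∃ C > (0:ℝ), ∀ n : ℕ, 2 ≤ n →
      (1 - 2 * Real.exp (-(1 / (n:ℝ))) * Real.cos ((n:ℝ) ^ (-γ))
          + Real.exp (-(2 / (n:ℝ))))⁻¹ ≤ C * (n:ℝ) ^ (2 * γ)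
      ∧ (∀ θ : ℝ, |θ| ≤ (n:ℝ) ^ (-γ) →
          ‖1 - 2 * Complex.exp (θ * Complex.I) * (Real.cos ((n:ℝ) ^ (-γ)) : ℂ)
              + Complex.exp (2 * θ * Complex.I)‖
            ≤ C * (1 - 2 * Real.exp (-(1 / (n:ℝ))) * Real.cos ((n:ℝ) ^ (-γ))
                + Real.exp (-(2 / (n:ℝ)))))
      ∧ (∀ θ : ℝ, |θ| ≤ 1 / (n:ℝ) →
          ‖(1 - 2 * Complex.exp (θ * Complex.I) * (Real.cos ((n:ℝ) ^ (-γ)) : ℂ)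
                + Complex.exp (2 * θ * Complex.I)) ^ 2
              - ((1 - 2 * Real.exp (-(1 / (n:ℝ))) * Real.cos ((n:ℝ) ^ (-γ))
                + Real.exp (-(2 / (n:ℝ))) : ℝ) : ℂ) ^ 2‖
            ≤ C * (1 - 2 * Real.exp (-(1 / (n:ℝ))) * Real.cos ((n:ℝ) ^ (-γ))
                + Real.exp (-(2 / (n:ℝ)))) ^ 2 / (n:ℝ))
      ∧ (∀ θ : ℝ, 1 / (n:ℝ) ≤ |θ| → |θ| ≤ (n:ℝ) ^ (-γ) →
          ‖(1 - 2 * Complex.exp (θ * Complex.I) * (Real.cos ((n:ℝ) ^ (-γ)) : ℂ)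
                + Complex.exp (2 * θ * Complex.I)) ^ 2
              - ((1 - 2 * Real.exp (-(1 / (n:ℝ))) * Real.cos ((n:ℝ) ^ (-γ))
                + Real.exp (-(2 / (n:ℝ))) : ℝ) : ℂ) ^ 2‖
            ≤ C * (1 - 2 * Real.exp (-(1 / (n:ℝ))) * Real.cos ((n:ℝ) ^ (-γ))
                + Real.exp (-(2 / (n:ℝ)))) ^ 2 * (n:ℝ) ^ (2 * γ) * |θ| ^ (2 * γ + 1)) := by
  obtain ⟨hγ0, hγ2⟩ := hγ
  refine ⟨1000, by norm_num, ?_⟩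
  intro n hn
  have hn0 : (0:ℝ) < n := by positivity
  have hn2 : (2:ℝ) ≤ n := by exact_mod_cast hn
  have hn1 : (1:ℝ) ≤ n := by linarith
  set x : ℝ := (n:ℝ) ^ (-γ) with hxdef
  set b : ℝ := Real.exp (-(1/(n:ℝ))) with hbdef
  have hx0 : 0 < x := Real.rpow_pos_of_pos hn0 _
  have hx1 : x ≤ 1 := Real.rpow_le_one_of_one_le_of_nonpos hn1 (by linarith)
  have hinv : 1/(n:ℝ) ≤ x := by
    rw [hxdef, show (1:ℝ)/(n:ℝ) = (n:ℝ)^(-1:ℝ) by rw [Real.rpow_neg_one]; ring]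
    exact Real.rpow_le_rpow_of_exponent_le hn1 (by linarith)
  have hx2eq : x^2 = (n:ℝ) ^ (-(2*γ)) := by
    rw [hxdef, ← Real.rpow_natCast ((n:ℝ)^(-γ)) 2, ← Real.rpow_mul hn0.le]
    norm_num; ring_nf
  have hxx : x^2 * (n:ℝ)^(2*γ) = 1 := by
    rw [hx2eq, ← Real.rpow_add hn0]; norm_num
  have hN0 : (0:ℝ) < (n:ℝ)^(2*γ) := Real.rpow_pos_of_pos hn0 _
  have hinv2 : 1/(n:ℝ) ≤ x^2 := by
    rw [hx2eq, show (1:ℝ)/(n:ℝ) = (n:ℝ)^(-1:ℝ) by rw [Real.rpow_neg_one]; ring]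
    exact Real.rpow_le_rpow_of_exponent_le hn1 (by linarith)
  have hbhalf : (1:ℝ)/2 ≤ b := by
    have h1n : 1/(n:ℝ) ≤ 1/2 := by
      rw [div_le_div_iff₀ hn0 (by norm_num)]; linarith
    have := Real.add_one_le_exp (-(1/(n:ℝ)))
    rw [hbdef]; linarith
  have hb1 : b ≤ 1 := by
    rw [hbdef]; exact Real.exp_le_one_iff.mpr (neg_nonpos.mpr (by positivity))
  have hbl : 1 - 1/(n:ℝ) ≤ b := by
    have := Real.add_one_le_exp (-(1/(n:ℝ))); rw [hbdef]; linarith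
  have hcosl : 1 - x^2/2 ≤ Real.cos x := Real.one_sub_sq_div_two_le_cos
  have hcosu : Real.cos x ≤ 1 - x^2/5 := by
    have hpi : |x| ≤ Real.pi := by
      rw [abs_of_pos hx0]; linarith [Real.pi_gt_three]
    have h := Real.cos_le_one_sub_mul_cos_sq hpi
    have hpi2 : Real.pi ^ 2 ≤ 10 := by nlinarith [Real.pi_lt_d2, Real.pi_gt_three]
    have hp0 : (0:ℝ) < Real.pi ^ 2 := by positivity
    have h15 : (1:ℝ)/5 ≤ 2/Real.pi^2 := by
      rw [div_le_div_iff₀ (by norm_num) hp0]; linarith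
    nlinarith [sq_nonneg x]
  have hexp2 : Real.exp (-(2/(n:ℝ))) = b^2 := by
    rw [hbdef, sq, ← Real.exp_add]; ring_nf
  set A : ℝ := 1 - 2*b*Real.cos x + Real.exp (-(2/(n:ℝ))) with hAdef
  have hAeq : A = (1-b)^2 + 2*b*(1 - Real.cos x) := by rw [hAdef, hexp2]; ring
  have hAl : x^2/5 ≤ A := by rw [hAeq]; nlinarith [sq_nonneg (1-b)]
  have hAu : A ≤ 2*x^2 := by
    have h1b : (1-b)^2 ≤ x^2 := by nlinarith
    rw [hAeq]; nlinarith
  have hA0 : 0 < A := lt_of_lt_of_le (by positivity) hAl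
  clear_value A b x
  -- complex preliminaries
  have hzsq : ∀ θ : ℝ, Complex.exp (2 * (θ:ℂ) * Complex.I)
      = Complex.exp ((θ:ℂ) * Complex.I)^2 := by
    intro θ; rw [sq, ← Complex.exp_add]; ring_nf
  -- |A(θ,n)| ≤ (|θ|+x)^2
  have key1 : ∀ θ : ℝ, ‖1 - 2 * Complex.exp ((θ:ℂ) * Complex.I) * ((Real.cos x : ℝ):ℂ)
      + Complex.exp ((θ:ℂ) * Complex.I)^2‖ ≤ (|θ| + x)^2 := by
    intro θ
    set z : ℂ := Complex.exp ((θ:ℂ) * Complex.I) with hzdef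
    set w : ℂ := Complex.exp ((x:ℂ) * Complex.I) with hwdef
    set w' : ℂ := Complex.exp (-(x:ℂ) * Complex.I) with hwdef'
    have hww : w * w' = 1 := by
      rw [hwdef, hwdef', ← Complex.exp_add,
        show (x:ℂ)*Complex.I + -(x:ℂ)*Complex.I = 0 by ring, Complex.exp_zero]
    have hwsum : w + w' = 2 * ((Real.cos x : ℝ) : ℂ) := by
      rw [Complex.ofReal_cos, Complex.two_cos, hwdef, hwdef']
    have hfac : 1 - 2*z*((Real.cos x : ℝ):ℂ) + z^2 = (z - w) * (z - w') := by
      have h : (z-w)*(z-w') = z^2 - (w+w')*z + w*w' := by ring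
      rw [h, hww, hwsum]; ring
    have hzw : ‖z - w‖ ≤ |θ| + x := by
      calc ‖z - w‖ ≤ ‖z - 1‖ + ‖1 - w‖ := by
            rw [show z - w = (z - 1) + (1 - w) by ring]; exact norm_add_le _ _
        _ ≤ |θ| + x := by
            have h2 : ‖1 - w‖ = ‖w - 1‖ := by
              rw [show (1:ℂ) - w = -(w-1) by ring, norm_neg]
            have h3 := aux_exp_I_sub_one x
            rw [abs_of_pos hx0] at h3
            rw [h2]; exact add_le_add (aux_exp_I_sub_one θ) h3
    have hzw' : ‖z - w'‖ ≤ |θ| + x := by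
      calc ‖z - w'‖ ≤ ‖z - 1‖ + ‖1 - w'‖ := by
            rw [show z - w' = (z - 1) + (1 - w') by ring]; exact norm_add_le _ _
        _ ≤ |θ| + x := by
            have h2 : ‖1 - w'‖ = ‖w' - 1‖ := by
              rw [show (1:ℂ) - w' = -(w'-1) by ring, norm_neg]
            have h3 := aux_exp_I_sub_one (-x)
            rw [abs_neg, abs_of_pos hx0] at h3
            rw [h2, hwdef']
            push_cast at h3 ⊢
            exact add_le_add (aux_exp_I_sub_one θ) h3
    rw [hfac, norm_mul, sq]
    exact mul_le_mul hzw hzw' (norm_nonneg _) (by positivity)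
  -- |A(θ,n) - A(n)| ≤ (|θ|+1/n) * (|θ|+1/n+x²)
  have key2 : ∀ θ : ℝ, ‖((1 - 2 * Complex.exp ((θ:ℂ) * Complex.I) * ((Real.cos x : ℝ):ℂ)
      + Complex.exp ((θ:ℂ) * Complex.I)^2) - ((A:ℝ):ℂ))‖
      ≤ (|θ| + 1/(n:ℝ)) * (|θ| + 1/(n:ℝ) + x^2) := by
    intro θ
    set z : ℂ := Complex.exp ((θ:ℂ) * Complex.I) with hzdef
    have hfacA : (1 - 2*z*((Real.cos x : ℝ):ℂ) + z^2) - ((A:ℝ):ℂ)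
        = (z - (b:ℂ)) * (z + (b:ℂ) - 2*((Real.cos x : ℝ):ℂ)) := by
      rw [hAdef, hexp2]; push_cast; ring
    have hzb : ‖z - (b:ℂ)‖ ≤ |θ| + 1/(n:ℝ) := by
      calc ‖z - (b:ℂ)‖ ≤ ‖z - 1‖ + ‖1 - (b:ℂ)‖ := by
            rw [show z - (b:ℂ) = (z - 1) + (1 - (b:ℂ)) by ring]; exact norm_add_le _ _
        _ ≤ |θ| + 1/(n:ℝ) := by
            have h2 : ‖1 - (b:ℂ)‖ = 1 - b := by
              rw [show (1:ℂ) - (b:ℂ) = ((1 - b : ℝ):ℂ) by push_cast; ring, Complex.norm_real, Real.norm_eq_abs,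
                _root_.abs_of_nonneg (by linarith)]
            rw [h2]
            have := aux_exp_I_sub_one θ
            linarith
    have hzb2 : ‖z + (b:ℂ) - 2*((Real.cos x : ℝ):ℂ)‖ ≤ |θ| + 1/(n:ℝ) + x^2 := by
      have hc1 : Real.cos x ≤ 1 := Real.cos_le_one x
      calc ‖z + (b:ℂ) - 2*((Real.cos x : ℝ):ℂ)‖
          ≤ ‖z - 1‖ + ‖((b:ℂ) - 1 + 2 - 2*((Real.cos x : ℝ):ℂ))‖ := by
            rw [show z + (b:ℂ) - 2*((Real.cos x : ℝ):ℂ)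
                = (z - 1) + ((b:ℂ) - 1 + 2 - 2*((Real.cos x : ℝ):ℂ)) by ring]
            exact norm_add_le _ _
        _ ≤ |θ| + 1/(n:ℝ) + x^2 := by
            have h2 : ‖((b:ℂ) - 1 + 2 - 2*((Real.cos x : ℝ):ℂ))‖
                ≤ (1-b) + (2 - 2*Real.cos x) := by
              rw [show (b:ℂ) - 1 + 2 - 2*((Real.cos x : ℝ):ℂ)
                  = ((b - 1 : ℝ):ℂ) + ((2 - 2*Real.cos x : ℝ):ℂ) by push_cast; ring]
              calc _ ≤ ‖((b-1:ℝ):ℂ)‖ + ‖((2-2*Real.cos x:ℝ):ℂ)‖ :=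
                    norm_add_le _ _
                _ = |b-1| + |2-2*Real.cos x| := by rw [Complex.norm_real, Real.norm_eq_abs, Complex.norm_real, Real.norm_eq_abs]
                _ = (1-b) + (2-2*Real.cos x) := by
                    rw [_root_.abs_of_nonpos (by linarith), _root_.abs_of_nonneg (by linarith)]
                    ring
            have h3 := aux_exp_I_sub_one θ
            have h4 : 2 - 2*Real.cos x ≤ x^2 := by linarith
            have h5 : 1 - b ≤ 1/(n:ℝ) := by linarith
            linarith
    rw [hfacA, norm_mul]
    exact mul_le_mul hzb hzb2 (norm_nonneg _) (by positivity)
  refine ⟨?_, ?_, ?_, ?_⟩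
  · -- (a1)
    have h1 : A⁻¹ ≤ (x^2/5)⁻¹ := by
      apply inv_anti₀ (by positivity) hAl
    have h2 : (x^2/5)⁻¹ = 5 * (n:ℝ)^(2*γ) := by
      have hx2inv : (x^2)⁻¹ = (n:ℝ)^(2*γ) := by
        field_simp
        nlinarith [hxx]
      rw [show (x^2/5)⁻¹ = 5 * (x^2)⁻¹ by field_simp, hx2inv]
    rw [h2] at h1
    nlinarith
  · -- (a2)
    intro θ hθ
    rw [hzsq θ]
    have h := key1 θ
    have hθ0 : 0 ≤ |θ| := abs_nonneg θ
    calc ‖_‖ ≤ (|θ| + x)^2 := h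
      _ ≤ 1000 * A := by nlinarith
  · -- (b)
    intro θ hθ
    rw [hzsq θ]
    set z : ℂ := Complex.exp ((θ:ℂ) * Complex.I) with hzdef
    set Aθ : ℂ := 1 - 2*z*((Real.cos x : ℝ):ℂ) + z^2 with hAθdef
    have hd : Aθ^2 - ((A:ℝ):ℂ)^2 = (Aθ - ((A:ℝ):ℂ)) * (Aθ + ((A:ℝ):ℂ)) := by ring
    rw [hd, norm_mul]
    have hθ0 : 0 ≤ |θ| := abs_nonneg θ
    have hθx : |θ| ≤ x := le_trans hθ hinv
    have h1 : ‖Aθ - ((A:ℝ):ℂ)‖ ≤ 30 * A / (n:ℝ) := by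
      have h := key2 θ
      have h2n : (2:ℝ)/(n:ℝ) = 1/(n:ℝ) + 1/(n:ℝ) := by ring
      have hb1 : (|θ| + 1/(n:ℝ)) * (|θ| + 1/(n:ℝ) + x^2) ≤ (2/(n:ℝ)) * (3*x^2) := by
        apply mul_le_mul (by linarith) _ (by positivity) (by positivity)
        have h2x : (2:ℝ)/(n:ℝ) ≤ 2*x^2 := by linarith
        linarith
      have h2 : (2/(n:ℝ)) * (3*x^2) ≤ 30 * A / (n:ℝ) := by
        rw [div_mul_eq_mul_div, div_le_div_iff₀ hn0 hn0]
        nlinarith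
      linarith
    have h2 : ‖Aθ + ((A:ℝ):ℂ)‖ ≤ 21 * A := by
      calc ‖Aθ + ((A:ℝ):ℂ)‖ ≤ ‖Aθ‖ + ‖((A:ℝ):ℂ)‖ :=
            norm_add_le _ _
        _ ≤ 21 * A := by
            have ha := key1 θ
            have hA' : ‖((A:ℝ):ℂ)‖ = A := by
              rw [Complex.norm_real, Real.norm_eq_abs, _root_.abs_of_pos hA0]
            rw [hA']
            have : (|θ| + x)^2 ≤ 4*x^2 := by nlinarith
            nlinarith
    calc ‖Aθ - ((A:ℝ):ℂ)‖ * ‖Aθ + ((A:ℝ):ℂ)‖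
        ≤ (30 * A / (n:ℝ)) * (21 * A) :=
          mul_le_mul h1 h2 (norm_nonneg _) (by positivity)
      _ ≤ 1000 * A^2 / (n:ℝ) := by
          rw [div_mul_eq_mul_div, div_le_div_iff₀ hn0 hn0]
          nlinarith
  · -- (c)
    intro θ hθl hθu
    rw [hzsq θ]
    set z : ℂ := Complex.exp ((θ:ℂ) * Complex.I) with hzdef
    set Aθ : ℂ := 1 - 2*z*((Real.cos x : ℝ):ℂ) + z^2 with hAθdef
    have hd : Aθ^2 - ((A:ℝ):ℂ)^2 = (Aθ - ((A:ℝ):ℂ)) * (Aθ + ((A:ℝ):ℂ)) := by ring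
    rw [hd, norm_mul]
    have hθ0 : (0:ℝ) < |θ| := lt_of_lt_of_le (by positivity) hθl
    set T : ℝ := |θ| ^ (2*γ + 1) with hTdef
    have hT0 : 0 < T := Real.rpow_pos_of_pos hθ0 _
    have hTa : θ^2 ≤ T := by
      have h1 : |θ| ^ (2:ℝ) ≤ |θ| ^ (2*γ+1) :=
        Real.rpow_le_rpow_of_exponent_ge hθ0 (le_trans hθu hx1) (by linarith)
      have h2 : |θ| ^ (2:ℝ) = θ^2 := by
        rw [show (2:ℝ) = ((2:ℕ):ℝ) by norm_num, Real.rpow_natCast, _root_.sq_abs]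
      rw [← h2]; exact h1
    have hTb : |θ| * x^2 ≤ T := by
      have h1 : x^2 ≤ |θ| ^ (2*γ) := by
        rw [hx2eq]
        have h2 : (n:ℝ)^(-(2*γ)) = (1/(n:ℝ))^(2*γ) := by
          rw [Real.rpow_neg hn0.le, one_div, Real.inv_rpow hn0.le]
        rw [h2]
        exact Real.rpow_le_rpow (by positivity) hθl (by linarith)
      have h3 : |θ| * |θ|^(2*γ) = T := by
        rw [hTdef, Real.rpow_add hθ0, Real.rpow_one]; ring
      nlinarith [Real.rpow_pos_of_pos hθ0 (2*γ)]
    have h1 : ‖Aθ - ((A:ℝ):ℂ)‖ ≤ 6 * T := by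
      have h := key2 θ
      have hb1 : (|θ| + 1/(n:ℝ)) * (|θ| + 1/(n:ℝ) + x^2) ≤ (2*|θ|) * (2*|θ| + x^2) := by
        nlinarith [sq_nonneg x]
      have h2 : (2*|θ|) * (2*|θ| + x^2) ≤ 6 * T := by
        nlinarith [hTa, hTb, _root_.sq_abs θ]
      linarith
    have h2 : ‖Aθ + ((A:ℝ):ℂ)‖ ≤ 21 * A := by
      calc ‖Aθ + ((A:ℝ):ℂ)‖ ≤ ‖Aθ‖ + ‖((A:ℝ):ℂ)‖ :=
            norm_add_le _ _
        _ ≤ 21 * A := by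
            have ha := key1 θ
            have hA' : ‖((A:ℝ):ℂ)‖ = A := by
              rw [Complex.norm_real, Real.norm_eq_abs, _root_.abs_of_pos hA0]
            rw [hA']
            have : (|θ| + x)^2 ≤ 4*x^2 := by nlinarith
            nlinarith
    have hAN : (1:ℝ)/5 ≤ A * (n:ℝ)^(2*γ) := by nlinarith
    calc ‖Aθ - ((A:ℝ):ℂ)‖ * ‖Aθ + ((A:ℝ):ℂ)‖
        ≤ (6 * T) * (21 * A) := mul_le_mul h1 h2 (norm_nonneg _) (by positivity)
      _ ≤ 1000 * A^2 * (n:ℝ)^(2*γ) * T := by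
          nlinarith [mul_le_mul_of_nonneg_right hAN (mul_nonneg hA0.le hT0.le),
            mul_pos hA0 hT0]
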